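/- (Proposition 3.2: transition property of Φ_q.) Let n ≥ 1, let i, k ∈ ℤ_{≥0}^n with i ≤ k componentwise, and let a, b, c ∈ ℂ with a ≠ 0, b ≠ 0, (b;q)_{|k|} ≠ 0 and (c;q)_{|k|} ≠ 0. Then ∑_{j ∈ ℤ^n, i ≤ j ≤ k} Φ_q(i|j;a,b) · Φ_q(j|k;b,c) = Φ_q(i|k;a,c). -/

import Mathlib

/-!
Proposition 3.2: transition property of the function `Φ_q` (eq. (13.49)–(13.50)
of Kuniba's book).  For `γ, β ∈ ℤⁿ` with `0 ≤ γ ≤ β` (componentwise) and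
`λ, μ ∈ ℂ`,
`Φ_q(γ|β;λ,μ) = q^{⟨β−γ,γ⟩} (μ/λ)^{|γ|} (λ;q)_{|γ|}(μ/λ;q)_{|β|−|γ|}/(μ;q)_{|β|}
  · ∏_a binom_q(β_a,γ_a)`, and `Φ_q(γ|β;λ,μ) = 0` unless `0 ≤ γ ≤ β`.
-/

noncomputable section
open scoped Classical

/-- `(u;q)_m = ∏_{k=0}^{m−1}(1−u q^k)`. -/
def qPochGen (q u : ℂ) (m : ℕ) : ℂ := ∏ k ∈ Finset.range m, (1 - u * q ^ k)

/-- `(q;q)_m`. -/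
def qPoch (q : ℂ) (m : ℕ) : ℂ := ∏ k ∈ Finset.range m, (1 - q ^ (k + 1))

/-- `|i| = ∑ i_a`. -/
def isum {n : ℕ} (i : Fin n → ℤ) : ℤ := ∑ a, i a

/-- `⟨i,j⟩ = ∑_{a<b} i_a j_b`. -/
def ipair {n : ℕ} (i j : Fin n → ℤ) : ℤ :=
  ∑ a, ∑ b, if a < b then i a * j b else 0

/-- the function `Φ_q(γ|β;λ,μ)`. -/
def Phi (q : ℂ) {n : ℕ} (γ β : Fin n → ℤ) (lam mu : ℂ) : ℂ :=
  if 0 ≤ γ ∧ γ ≤ β then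
    q ^ (ipair (β - γ) γ) * (mu / lam) ^ (isum γ).toNat
      * qPochGen q lam (isum γ).toNat
      * qPochGen q (mu / lam) (isum β - isum γ).toNat
      / qPochGen q mu (isum β).toNat
      * ∏ a, (qPoch q (β a).toNat / (qPoch q (γ a).toNat * qPoch q (β a - γ a).toNat))
  else 0

variable {q : ℂ}

lemma qPoch_succ (q : ℂ) (m : ℕ) : qPoch q (m + 1) = qPoch q m * (1 - q ^ (m + 1)) :=
  Finset.prod_range_succ _ _

lemma one_sub_qpow_ne (hq : ∀ m : ℕ, 0 < m → q ^ m ≠ 1) (m : ℕ) : (1 : ℂ) - q ^ (m + 1) ≠ 0 :=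
  sub_ne_zero.mpr (Ne.symm (hq (m + 1) (Nat.succ_pos m)))

lemma qPoch_ne_zero (hq : ∀ m : ℕ, 0 < m → q ^ m ≠ 1) (m : ℕ) : qPoch q m ≠ 0 :=
  Finset.prod_ne_zero_iff.mpr fun k _ => one_sub_qpow_ne hq k

lemma qPochGen_succ (q u : ℂ) (m : ℕ) :
    qPochGen q u (m + 1) = qPochGen q u m * (1 - u * q ^ m) :=
  Finset.prod_range_succ _ _

@[simp] lemma qPochGen_zero (q u : ℂ) : qPochGen q u 0 = 1 := rfl
@[simp] lemma qPoch_zero (q : ℂ) : qPoch q 0 = 1 := rfl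

lemma qPochGen_add (q u : ℂ) (m l : ℕ) :
    qPochGen q u (m + l) = qPochGen q u m * qPochGen q (u * q ^ m) l := by
  unfold qPochGen
  rw [Finset.prod_range_add]
  congr 1
  refine Finset.prod_congr rfl fun k _ => ?_
  rw [pow_add]; ring

lemma qPochGen_shift_ne_zero {u : ℂ} {M : ℕ} (hM : qPochGen q u M ≠ 0)
    {s m : ℕ} (h : s + m ≤ M) : qPochGen q (u * q ^ s) m ≠ 0 := by
  obtain ⟨r, hr⟩ : ∃ r, M = s + (m + r) := ⟨M - (s + m), by omega⟩
  subst hr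
  rw [qPochGen_add, qPochGen_add] at hM
  exact fun h0 => hM (by rw [h0]; ring)

lemma qPochGen_le_ne_zero {u : ℂ} {M : ℕ} (hM : qPochGen q u M ≠ 0)
    {m : ℕ} (h : m ≤ M) : qPochGen q u m ≠ 0 := by
  have := qPochGen_shift_ne_zero (q := q) hM (s := 0) (m := m) (by omega)
  simpa using this

def qbinom (q : ℂ) (N t : ℕ) : ℂ :=
  if t ≤ N then qPoch q N / (qPoch q t * qPoch q (N - t)) else 0

lemma qbinom_zero (hq : ∀ m : ℕ, 0 < m → q ^ m ≠ 1) (N : ℕ) : qbinom q N 0 = 1 := by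
  simp [qbinom, div_self, mul_comm, qPoch_ne_zero hq N]

lemma qbinom_self (hq : ∀ m : ℕ, 0 < m → q ^ m ≠ 1) (N : ℕ) : qbinom q N N = 1 := by
  simp [qbinom, div_self, qPoch_ne_zero hq N]

lemma qbinom_pascal (hq : ∀ m : ℕ, 0 < m → q ^ m ≠ 1) (N t : ℕ) (ht : t ≤ N) :
    qbinom q (N + 1) (t + 1) = qbinom q N (t + 1) + q ^ (N - t) * qbinom q N t := by
  rcases eq_or_lt_of_le ht with rfl | h
  · have h0 : qbinom q t (t + 1) = 0 := by unfold qbinom; rw [if_neg (by omega)]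
    rw [qbinom_self hq, qbinom_self hq, h0]
    simp
  · obtain ⟨d, rfl⟩ : ∃ d, N = t + 1 + d := ⟨N - (t + 1), by omega⟩
    unfold qbinom
    rw [if_pos (by omega), if_pos (by omega), if_pos (by omega)]
    have e1 : t + 1 + d + 1 - (t + 1) = d + 1 := by omega
    have e2 : t + 1 + d - (t + 1) = d := by omega
    have e3 : t + 1 + d - t = d + 1 := by omega
    rw [e1, e2, e3]
    rw [qPoch_succ q (t + 1 + d), qPoch_succ q t, qPoch_succ q d]
    have hN : q ^ (t + 1 + d + 1) = q ^ (t + 1) * q ^ (d + 1) := by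
      rw [← pow_add]; ring_nf
    have h1 := qPoch_ne_zero hq t
    have h2 := qPoch_ne_zero hq d
    have h3 := one_sub_qpow_ne hq t
    have h4 := one_sub_qpow_ne hq d
    field_simp
    rw [hN]; ring

lemma qVandermonde (hq : ∀ m : ℕ, 0 < m → q ^ m ≠ 1) (u v : ℂ) (N : ℕ) :
    ∑ t ∈ Finset.range (N + 1),
      qbinom q N t * qPochGen q u t * qPochGen q v (N - t) * v ^ t
      = qPochGen q (u * v) N := by
  induction N with
  | zero => simp [qbinom_zero hq]
  | succ N ih =>
    rw [Finset.sum_range_succ']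
    have step : ∀ i ∈ Finset.range (N + 1),
        qbinom q (N + 1) (i + 1) * qPochGen q u (i + 1) *
            qPochGen q v (N + 1 - (i + 1)) * v ^ (i + 1)
        = (qbinom q N (i + 1) * qPochGen q u (i + 1) *
            qPochGen q v (N + 1 - (i + 1)) * v ^ (i + 1))
          + (q ^ (N - i) *
              (qbinom q N i * qPochGen q u i * qPochGen q v (N - i) * v ^ i) *
              ((1 - u * q ^ i) * v)) := by
      intro i hi
      have hiN : i ≤ N := by
        have := Finset.mem_range.mp hi; omega
      rw [qbinom_pascal hq N i hiN, qPochGen_succ q u i]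
      have e : N + 1 - (i + 1) = N - i := by omega
      rw [e]; ring
    rw [Finset.sum_congr rfl step, Finset.sum_add_distrib]
    have f0eq : qbinom q (N + 1) 0 = qbinom q N 0 := by
      rw [qbinom_zero hq, qbinom_zero hq]
    rw [f0eq, add_right_comm]
    have E := Finset.sum_range_succ'
      (fun s => qbinom q N s * qPochGen q u s * qPochGen q v (N + 1 - s) * v ^ s) (N + 1)
    beta_reduce at E
    rw [← E]
    have E2 := Finset.sum_range_succ
      (fun s => qbinom q N s * qPochGen q u s * qPochGen q v (N + 1 - s) * v ^ s) (N + 1)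
    beta_reduce at E2
    rw [E2]
    have hlast : qbinom q N (N + 1) = 0 := by
      unfold qbinom; rw [if_neg (by omega)]
    rw [hlast, zero_mul, zero_mul, zero_mul, add_zero, ← Finset.sum_add_distrib]
    have step2 : ∀ i ∈ Finset.range (N + 1),
        (qbinom q N i * qPochGen q u i * qPochGen q v (N + 1 - i) * v ^ i
          + q ^ (N - i) *
              (qbinom q N i * qPochGen q u i * qPochGen q v (N - i) * v ^ i) *
              ((1 - u * q ^ i) * v))
        = (1 - u * v * q ^ N) *
            (qbinom q N i * qPochGen q u i * qPochGen q v (N - i) * v ^ i) := by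
      intro i hi
      have hiN : i ≤ N := by
        have := Finset.mem_range.mp hi; omega
      have e : N + 1 - i = (N - i) + 1 := by omega
      rw [e, qPochGen_succ]
      have e2 : q ^ N = q ^ (N - i) * q ^ i := by
        rw [← pow_add]; congr 1; omega
      rw [e2]; ring
    rw [Finset.sum_congr rfl step2, ← Finset.mul_sum, ih, qPochGen_succ]
    ring

private lemma div_key (A U V B C Qg Qt QN QNt Qgt QgN X1 X2 X3 X4 : ℂ)
    (hB : B ≠ 0) (hQgt : Qgt ≠ 0) (hQN : QN ≠ 0) (hX : X1 * X2 = X3 * X4) :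
    X1 * A * U / B * (Qgt / (Qg * Qt)) * (X2 * B * V / C * (QgN / (Qgt * QNt))) =
    X3 * A / C * (QgN / (Qg * QN)) * (QN / (Qt * QNt) * U * V * X4) := by
  have c1 : B * B⁻¹ = 1 := mul_inv_cancel₀ hB
  have c2 : Qgt * Qgt⁻¹ = 1 := mul_inv_cancel₀ hQgt
  have c3 : QN * QN⁻¹ = 1 := mul_inv_cancel₀ hQN
  simp only [div_eq_mul_inv, mul_inv]
  linear_combination (X1*X2*(A*U*V*QgN*Qg⁻¹*Qt⁻¹*C⁻¹*QNt⁻¹)*B*B⁻¹)*c2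
    + (X1*X2*(A*U*V*QgN*Qg⁻¹*Qt⁻¹*C⁻¹*QNt⁻¹))*c1
    + (A*U*V*QgN*Qg⁻¹*Qt⁻¹*C⁻¹*QNt⁻¹)*hX
    - (X3*X4*(A*U*V*QgN*Qg⁻¹*Qt⁻¹*C⁻¹*QNt⁻¹))*c3

def phi1 (q : ℂ) (g m : ℕ) (lam mu : ℂ) : ℂ :=
  (mu / lam) ^ g * qPochGen q lam g * qPochGen q (mu / lam) (m - g) / qPochGen q mu m
    * (qPoch q m / (qPoch q g * qPoch q (m - g)))

lemma phi1_trans (hq : ∀ m : ℕ, 0 < m → q ^ m ≠ 1) (a b c : ℂ) (ha : a ≠ 0) (hb : b ≠ 0)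
    {g m : ℕ} (hgm : g ≤ m)
    (hbm : qPochGen q b m ≠ 0) (hcm : qPochGen q c m ≠ 0) :
    ∑ j ∈ Finset.Icc g m, phi1 q g j a b * phi1 q j m b c = phi1 q g m a c := by
  obtain ⟨N, rfl⟩ : ∃ N, m = g + N := ⟨m - g, by omega⟩
  have hca : b / a * (c / b) = c / a := by
    field_simp
  have hIcc : Finset.Icc g (g + N) = (Finset.Icc 0 N).map (addLeftEmbedding g) := by
    rw [Finset.map_add_left_Icc]; simp
  have hrange : Finset.Icc (0:ℕ) N = Finset.range (N + 1) := by
    ext x; simp [Nat.lt_succ_iff]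
  rw [hIcc, Finset.sum_map]
  have hemb : ∀ t, addLeftEmbedding g t = g + t := fun t => rfl
  have step : ∀ t ∈ Finset.Icc (0:ℕ) N,
      phi1 q g (addLeftEmbedding g t) a b * phi1 q (addLeftEmbedding g t) (g + N) b c
      = ((c / a) ^ g * qPochGen q a g / qPochGen q c (g + N)
          * (qPoch q (g + N) / (qPoch q g * qPoch q N)))
        * (qbinom q N t * qPochGen q (b / a) t * qPochGen q (c / b) (N - t) * (c / b) ^ t) := by
    intro t ht
    have htN : t ≤ N := by have := Finset.mem_Icc.mp ht; omega
    rw [hemb]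
    simp only [phi1, qbinom, if_pos htN]
    have e1 : g + t - g = t := by omega
    have e2 : g + N - (g + t) = N - t := by omega
    have e3 : g + N - g = N := by omega
    rw [e1, e2]
    have hPb : qPochGen q b (g + t) ≠ 0 := qPochGen_le_ne_zero hbm (by omega)
    have hQg := qPoch_ne_zero hq g
    have hQt := qPoch_ne_zero hq t
    have hQN := qPoch_ne_zero hq N
    have hQNt := qPoch_ne_zero hq (N - t)
    have hQgt := qPoch_ne_zero hq (g + t)
    have hpow : (b / a) ^ g * (c / b) ^ (g + t) = (c / a) ^ g * (c / b) ^ t := by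
      rw [pow_add, ← mul_assoc, ← mul_pow, hca]
    exact div_key _ _ _ _ _ _ _ _ _ _ _ _ _ _ _ hPb hQgt hQN hpow
  rw [Finset.sum_congr rfl step, ← Finset.mul_sum, hrange, qVandermonde hq, hca]
  simp only [phi1]
  have e3 : g + N - g = N := by omega
  rw [e3]
  ring

lemma isum_sub {n : ℕ} (x y : Fin n → ℤ) : isum (x - y) = isum x - isum y := by
  simp [isum, Finset.sum_sub_distrib]

lemma isum_snoc {n : ℕ} (x : Fin (n + 1) → ℤ) :
    isum x = isum (Fin.init x) + x (Fin.last n) := by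
  simp [isum, Fin.sum_univ_castSucc, Fin.init]

lemma ipair_snoc {n : ℕ} (x y : Fin (n + 1) → ℤ) :
    ipair x y = ipair (Fin.init x) (Fin.init y) + isum (Fin.init x) * y (Fin.last n) := by
  unfold ipair isum
  rw [Fin.sum_univ_castSucc]
  have hlast : ∑ b : Fin (n + 1),
      (if Fin.last n < b then x (Fin.last n) * y b else 0) = 0 := by
    apply Finset.sum_eq_zero; intro b _
    rw [if_neg (not_lt.mpr (Fin.le_last b))]
  rw [hlast, add_zero, Finset.sum_mul, ← Finset.sum_add_distrib]
  refine Finset.sum_congr rfl fun a _ => ?_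
  rw [Fin.sum_univ_castSucc, if_pos (Fin.castSucc_lt_last a)]
  have : ∀ b : Fin n, (if a.castSucc < b.castSucc then x a.castSucc * y b.castSucc else 0)
      = (if a < b then Fin.init x a * Fin.init y b else 0) := by
    intro b; simp [Fin.init, Fin.castSucc_lt_castSucc_iff]
  rw [Finset.sum_congr rfl fun b _ => this b]
  simp [Fin.init]

lemma Phi_snoc (hq0 : q ≠ 0) {n : ℕ} (γ β : Fin (n + 1) → ℤ)
    (h0 : 0 ≤ γ) (h1 : γ ≤ β) (lam mu : ℂ) :
    Phi q γ β lam mu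
      = Phi q (Fin.init γ) (Fin.init β) lam mu *
        phi1 q (γ (Fin.last n)).toNat (β (Fin.last n)).toNat
          (lam * q ^ (isum (Fin.init γ)).toNat) (mu * q ^ (isum (Fin.init β)).toNat) := by
  have h0p : ∀ i, (0:ℤ) ≤ γ i := fun i => h0 i
  have h1p : ∀ i, γ i ≤ β i := fun i => h1 i
  have h0' : (0 : Fin n → ℤ) ≤ Fin.init γ := fun a => h0p _
  have h1' : Fin.init γ ≤ Fin.init β := fun a => h1p _
  have hG0 : 0 ≤ isum (Fin.init γ) := Finset.sum_nonneg fun a _ => h0p _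
  have hB0 : 0 ≤ isum (Fin.init β) := le_trans hG0 (Finset.sum_le_sum fun a _ => h1p _)
  have hGB : isum (Fin.init γ) ≤ isum (Fin.init β) := Finset.sum_le_sum fun a _ => h1p _
  have hgn0 : 0 ≤ γ (Fin.last n) := h0p _
  have hgbn : γ (Fin.last n) ≤ β (Fin.last n) := h1p _
  -- ℕ abbreviations
  set g' : ℕ := (isum (Fin.init γ)).toNat with hg'
  set b' : ℕ := (isum (Fin.init β)).toNat with hb'
  set gN : ℕ := (γ (Fin.last n)).toNat with hgN
  set bN : ℕ := (β (Fin.last n)).toNat with hbN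
  have hgb' : g' ≤ b' := by omega
  have hgbN : gN ≤ bN := by omega
  rw [Phi, if_pos ⟨h0, h1⟩, Phi, if_pos ⟨h0', h1'⟩]
  -- decompose the toNat's
  have e1 : (isum γ).toNat = g' + gN := by rw [isum_snoc]; omega
  have e2 : (isum β).toNat = b' + bN := by rw [isum_snoc]; omega
  have e3 : (isum β - isum γ).toNat = (b' - g') + (bN - gN) := by
    rw [isum_snoc γ, isum_snoc β]; omega
  rw [e1, e2, e3]
  -- decompose ipair
  have einit : Fin.init (β - γ) = Fin.init β - Fin.init γ := rfl
  have eip : ipair (β - γ) γ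
      = ipair (Fin.init β - Fin.init γ) (Fin.init γ) + ((b' - g' : ℕ) * (gN : ℕ) : ℕ) := by
    rw [ipair_snoc, einit, isum_sub]
    congr 1
    push_cast
    rw [Int.toNat_of_nonneg hgn0]
    congr 1
    omega
  rw [eip, zpow_add₀ hq0, zpow_natCast, pow_mul]
  -- decompose the Pochhammer symbols
  rw [pow_add, qPochGen_add q lam g' gN, qPochGen_add q (mu / lam) (b' - g') (bN - gN),
    qPochGen_add q mu b' bN]
  -- decompose the product of binomials
  rw [Fin.prod_univ_castSucc]
  have ebin : ∀ a : Fin n,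
      qPoch q (β a.castSucc).toNat /
          (qPoch q (γ a.castSucc).toNat * qPoch q (β a.castSucc - γ a.castSucc).toNat)
        = qPoch q (Fin.init β a).toNat /
          (qPoch q (Fin.init γ a).toNat * qPoch q (Fin.init β a - Fin.init γ a).toNat) := by
    intro a; rfl
  rw [Finset.prod_congr rfl fun a _ => ebin a]
  -- the phi1 side
  rw [phi1]
  have hrat : mu * q ^ b' / (lam * q ^ g') = mu / lam * q ^ (b' - g') := by
    rw [mul_div_mul_comm, div_eq_mul_inv (q ^ b'), ← pow_sub₀ q hq0 hgb']
  have elast : (β (Fin.last n) - γ (Fin.last n)).toNat = bN - gN := by omega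
  have e5 : (isum (Fin.init β) - isum (Fin.init γ)).toNat = b' - g' := by omega
  rw [hrat, elast, mul_pow, e5]
  ring

lemma sum_Icc_snoc {n : ℕ} (i k : Fin (n + 1) → ℤ) (F : (Fin (n + 1) → ℤ) → ℂ) :
    ∑ j ∈ Finset.Icc i k, F j
      = ∑ j' ∈ Finset.Icc (Fin.init i) (Fin.init k),
          ∑ t ∈ Finset.Icc (i (Fin.last n)) (k (Fin.last n)), F (Fin.snoc j' t) := by
  rw [← Finset.sum_product']
  refine Finset.sum_nbij' (fun j => (Fin.init j, j (Fin.last n)))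
    (fun p => Fin.snoc p.1 p.2) ?_ ?_ ?_ ?_ ?_
  · intro j hj
    rw [Finset.mem_Icc] at hj
    rw [Finset.mem_product, Finset.mem_Icc, Finset.mem_Icc]
    exact ⟨⟨fun a => hj.1 _, fun a => hj.2 _⟩, hj.1 _, hj.2 _⟩
  · intro p hp
    rw [Finset.mem_product, Finset.mem_Icc, Finset.mem_Icc] at hp
    rw [Finset.mem_Icc]
    constructor <;> intro a <;>
      refine Fin.lastCases ?_ (fun b => ?_) a <;>
      simp [Fin.snoc_last, Fin.snoc_castSucc]
    · exact hp.2.1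
    · exact hp.1.1 b
    · exact hp.2.2
    · exact hp.1.2 b
  · intro j _; exact Fin.snoc_init_self j
  · intro p _; simp [Fin.init_snoc, Fin.snoc_last]
  · intro j _; rw [Fin.snoc_init_self]

theorem Phi_trans_aux (q : ℂ) (hq0 : q ≠ 0) (hq : ∀ m : ℕ, 0 < m → q ^ m ≠ 1) :
    ∀ (n : ℕ) (i k : Fin n → ℤ), 0 ≤ i → i ≤ k → ∀ (a b c : ℂ), a ≠ 0 → b ≠ 0 →
      qPochGen q b (isum k).toNat ≠ 0 → qPochGen q c (isum k).toNat ≠ 0 →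
      ∑ j ∈ Finset.Icc i k, Phi q i j a b * Phi q j k b c = Phi q i k a c := by
  intro n
  induction n with
  | zero =>
    intro i k hi hik a b c ha hb hbk hck
    have hik' : i = k := Subsingleton.elim i k
    subst hik'
    rw [Finset.Icc_self, Finset.sum_singleton]
    have hPhi : ∀ lam mu : ℂ, Phi q i i lam mu = 1 := by
      intro lam mu
      rw [Phi, if_pos ⟨hi, le_rfl⟩]
      simp [isum, ipair]
    rw [hPhi, hPhi, hPhi, mul_one]
  | succ n ih =>
    intro i k hi hik a b c ha hb hbk hck
    have hip : ∀ x, (0:ℤ) ≤ i x := fun x => hi x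
    have hikp : ∀ x, i x ≤ k x := fun x => hik x
    have hi' : (0 : Fin n → ℤ) ≤ Fin.init i := fun x => hip _
    have hik' : Fin.init i ≤ Fin.init k := fun x => hikp _
    have hsumk : (isum k).toNat = (isum (Fin.init k)).toNat + (k (Fin.last n)).toNat := by
      rw [isum_snoc]
      have h1 : 0 ≤ isum (Fin.init k) :=
        Finset.sum_nonneg fun x _ => le_trans (hip _) (hikp _)
      have h2 : 0 ≤ k (Fin.last n) := le_trans (hip _) (hikp _)
      omega
    have hbk' : qPochGen q b (isum (Fin.init k)).toNat ≠ 0 :=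
      qPochGen_le_ne_zero hbk (by omega)
    have hck' : qPochGen q c (isum (Fin.init k)).toNat ≠ 0 :=
      qPochGen_le_ne_zero hck (by omega)
    set A : ℂ := a * q ^ (isum (Fin.init i)).toNat with hA
    set C : ℂ := c * q ^ (isum (Fin.init k)).toNat with hC
    have hAne : A ≠ 0 := mul_ne_zero ha (pow_ne_zero _ hq0)
    rw [sum_Icc_snoc i k (fun j => Phi q i j a b * Phi q j k b c)]
    have inner : ∀ j' ∈ Finset.Icc (Fin.init i) (Fin.init k),
        ∑ t ∈ Finset.Icc (i (Fin.last n)) (k (Fin.last n)),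
            Phi q i (Fin.snoc j' t) a b * Phi q (Fin.snoc j' t) k b c
          = (Phi q (Fin.init i) j' a b * Phi q j' (Fin.init k) b c) *
              phi1 q (i (Fin.last n)).toNat (k (Fin.last n)).toNat A C := by
      intro j' hj'
      rw [Finset.mem_Icc] at hj'
      set B : ℂ := b * q ^ (isum j').toNat with hB
      have hBne : B ≠ 0 := mul_ne_zero hb (pow_ne_zero _ hq0)
      have hj'k : isum j' ≤ isum (Fin.init k) := Finset.sum_le_sum fun x _ => hj'.2 x
      have hj'0 : 0 ≤ isum j' := Finset.sum_nonneg fun x _ => le_trans (hi' x) (hj'.1 x)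
      have hBk : qPochGen q B (k (Fin.last n)).toNat ≠ 0 :=
        qPochGen_shift_ne_zero hbk (by omega)
      have hCk : qPochGen q C (k (Fin.last n)).toNat ≠ 0 :=
        qPochGen_shift_ne_zero hck (by omega)
      have step : ∀ t ∈ Finset.Icc (i (Fin.last n)) (k (Fin.last n)),
          Phi q i (Fin.snoc j' t) a b * Phi q (Fin.snoc j' t) k b c
            = (Phi q (Fin.init i) j' a b * Phi q j' (Fin.init k) b c) *
                (phi1 q (i (Fin.last n)).toNat t.toNat A B *
                  phi1 q t.toNat (k (Fin.last n)).toNat B C) := by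
        intro t ht
        rw [Finset.mem_Icc] at ht
        have hisnoc : i ≤ Fin.snoc j' t := by
          intro x
          refine Fin.lastCases ?_ (fun y => ?_) x
          · simpa using ht.1
          · simp only [Fin.snoc_castSucc]; exact hj'.1 y
        have hsnock : Fin.snoc j' t ≤ k := by
          intro x
          refine Fin.lastCases ?_ (fun y => ?_) x
          · simpa using ht.2
          · simp only [Fin.snoc_castSucc]; exact hj'.2 y
        have h0snoc : (0 : Fin (n+1) → ℤ) ≤ Fin.snoc j' t := le_trans hi hisnoc
        rw [Phi_snoc hq0 i (Fin.snoc j' t) hi hisnoc a b,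
          Phi_snoc hq0 (Fin.snoc j' t) k h0snoc hsnock b c]
        simp only [Fin.init_snoc, Fin.snoc_last]
        ring
      rw [Finset.sum_congr rfl step, ← Finset.mul_sum]
      congr 1
      have hre : ∑ t ∈ Finset.Icc (i (Fin.last n)) (k (Fin.last n)),
          (phi1 q (i (Fin.last n)).toNat t.toNat A B *
            phi1 q t.toNat (k (Fin.last n)).toNat B C)
          = ∑ s ∈ Finset.Icc (i (Fin.last n)).toNat (k (Fin.last n)).toNat,
              (phi1 q (i (Fin.last n)).toNat s A B *
                phi1 q s (k (Fin.last n)).toNat B C) := by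
        refine Finset.sum_nbij' (fun t => t.toNat) (fun s => (s : ℤ)) ?_ ?_ ?_ ?_ ?_
        · intro t htm
          rw [Finset.mem_Icc] at htm ⊢
          have := hip (Fin.last n); have := hikp (Fin.last n); omega
        · intro s hsm
          rw [Finset.mem_Icc] at hsm ⊢
          have := hip (Fin.last n); have := hikp (Fin.last n); omega
        · intro t htm
          rw [Finset.mem_Icc] at htm
          have := hip (Fin.last n); have := hikp (Fin.last n); omega
        · intro s hsm; simp
        · intro t htm; rfl
      rw [hre, phi1_trans hq A B C hAne hBne (by have := hip (Fin.last n); have := hikp (Fin.last n); omega) hBk hCk]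
    rw [Finset.sum_congr rfl inner, ← Finset.sum_mul,
      ih (Fin.init i) (Fin.init k) hi' hik' a b c ha hb hbk' hck',
      ← Phi_snoc hq0 i k hi hik a c]

/-- **Proposition 3.2** (transition property of `Φ_q`):
`∑_{i ≤ j ≤ k} Φ_q(i|j;a,b)·Φ_q(j|k;b,c) = Φ_q(i|k;a,c)`. -/
theorem Phi_transition (q : ℂ) (hq0 : q ≠ 0) (hq : ∀ m : ℕ, 0 < m → q ^ m ≠ 1)
    {n : ℕ} (hn : 1 ≤ n) (i k : Fin n → ℤ) (hi : 0 ≤ i) (hik : i ≤ k)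
    (a b c : ℂ) (ha : a ≠ 0) (hb : b ≠ 0)
    (hbk : qPochGen q b (isum k).toNat ≠ 0)
    (hck : qPochGen q c (isum k).toNat ≠ 0) :
    ∑ j ∈ Finset.Icc i k, Phi q i j a b * Phi q j k b c = Phi q i k a c := by
  exact Phi_trans_aux q hq0 hq n i k hi hik a b c ha hb hbk hck
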